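/- Theorem (distinguished generating subgroups of the group of a power complex, Theorem 4.2). Let 𝒦 be a family of subsets of V with ∅ ∈ 𝒦, and let ∅ = C_{-1} ⊊ C_0 ⊊ C_1 ⊊ ⋯ ⊊ C_k be a maximal chain in (𝒦, ⊆) whose smallest nonempty member C_0 = {x₀} is a singleton. Fix a ∈ N and let ā : V → N be the constant function with value a, so that the base flag of n^𝒦 is the chain {ā} = C_{-1}(ā) ⊊ C_0(ā) ⊊ ⋯ ⊊ C_k(ā) in (ℱ, ⊆). For −1 ≤ j ≤ k let R_j := {φ ∈ Aut(𝒦) : φ(C_m) = C_m for all m ≠ j} (so R_{−1} is the stabilizer of the whole chain in Aut(𝒦)). Then, inside the wreath product S_n ≀ Aut(𝒦) acting on subsets of V → N via (σ,φ) ↦ θ_{σ,φ}: (a) the subgroup of elements mapping every face C_j(ā) (−1 ≤ j ≤ k) onto itself equals {(σ,φ) : φ ∈ R_{−1} and σ_i(a) = a for all i ∈ V}, which is isomorphic to S_{n−1} ≀ R_{−1}; (b) the subgroup of elements mapping every face C_j(ā) with 0 ≤ j ≤ k onto itself (the vertex {ā} being unconstrained) equals {(σ,φ) : φ ∈ R_{−1}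 and σ_i(a) = a for all i ∈ V with i ≠ x₀}, which is isomorphic to (S_n × S_{n−1}^{v−1}) ⋊ R_{−1}; (c) for each 1 ≤ m ≤ k, the subgroup of elements mapping every face C_j(ā) with j ≠ m−1 onto itself (including the vertex {ā}) equals {(σ,φ) : φ ∈ R_{m−1} and σ_i(a) = a for all i ∈ V}, which is isomorphic to S_{n−1} ≀ R_{m−1}. -/

import Mathlib

/-- The face `F(ε)` of the power complex. -/
def face (n v : ℕ) (F : Set (Fin v)) (ε : Fin v → Fin n) : Set (Fin v → Fin n) :=
  {η | ∀ i ∉ F, η i = ε i}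

/-- The power complex `n^𝒦`, as a family of subsets of `V → N`. -/
def powerComplex (n v : ℕ) (𝒦 : Set (Set (Fin v))) : Set (Set (Fin v → Fin n)) :=
  {A | ∃ F ∈ 𝒦, ∃ ε : Fin v → Fin n, A = face n v F ε}

/-- The automorphism group `Aut(𝒦)` of the complex `𝒦`: all permutations `φ` of the vertex
set such that `F ∈ 𝒦 ↔ φ(F) ∈ 𝒦` for every subset `F`. -/
def AutK (v : ℕ) (𝒦 : Set (Set (Fin v))) : Subgroup (Equiv.Perm (Fin v)) where
  carrier := {φ | ∀ F : Set (Fin v), F ∈ 𝒦 ↔ φ '' F ∈ 𝒦}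
  one_mem' := by intro F; simp
  mul_mem' := by
    intro φ ψ hφ hψ F
    have h : ⇑(φ * ψ) '' F = φ '' (ψ '' F) := by
      rw [← Set.image_comp]; rfl
    rw [h]
    exact (hψ F).trans (hφ (ψ '' F))
  inv_mem' := by
    intro φ hφ F
    have h := hφ (⇑(φ⁻¹) '' F)
    have h2 : ⇑φ '' (⇑(φ⁻¹) '' F) = F := by ext x; simp
    rw [h2] at h
    exact h.symm

/-- The permutation `θ_{σ,φ}` of `V → N`, `θ_{σ,φ}(η) i = σ_{φ⁻¹ i}(η (φ⁻¹ i))`. -/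
def theta {n v : ℕ} (σ : Fin v → Equiv.Perm (Fin n)) (φ : Equiv.Perm (Fin v)) :
    Equiv.Perm (Fin v → Fin n) where
  toFun η i := σ (φ⁻¹ i) (η (φ⁻¹ i))
  invFun η i := (σ i)⁻¹ (η (φ i))
  left_inv η := by funext i; simp
  right_inv η := by funext i; simp

/-- The coordinate-permuting action on a direct power of a group: `(φ·σ)_i = σ_{φ⁻¹ i}`. -/
def permPi (v : ℕ) (G : Type*) [Group G] : Equiv.Perm (Fin v) →* MulAut (Fin v → G) where
  toFun φ :=
    { toFun := fun σ i => σ (φ⁻¹ i)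
      invFun := fun σ i => σ (φ i)
      left_inv := fun σ => by funext i; simp
      right_inv := fun σ => by funext i; simp
      map_mul' := fun σ τ => rfl }
  map_one' := by ext σ i; simp
  map_mul' := fun φ ψ => by ext σ i; simp [mul_inv_rev]

/-- The wreath product `S_n ≀ Aut(𝒦) = (∏_{i ∈ V} S_n) ⋊ Aut(𝒦)`. -/
abbrev Wreath (n v : ℕ) (𝒦 : Set (Set (Fin v))) :=
  (Fin v → Equiv.Perm (Fin n)) ⋊[(permPi v (Equiv.Perm (Fin n))).comp (AutK v 𝒦).subtype]
    (AutK v 𝒦)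

/-- `C` is a maximal chain of the family `S` partially ordered by inclusion. -/
def IsMaxChainIn {α : Type*} (S : Set (Set α)) (C : Set (Set α)) : Prop :=
  C ⊆ S ∧ IsChain (· ⊆ ·) C ∧
    ∀ C' : Set (Set α), C' ⊆ S → IsChain (· ⊆ ·) C' → C ⊆ C' → C' = C

/-- The subgroup of permutations of `V` mapping each member of the family `S` onto itself. -/
def setStab (v : ℕ) (S : Set (Set (Fin v))) : Subgroup (Equiv.Perm (Fin v)) where
  carrier := {φ | ∀ A ∈ S, φ '' A = A}
  one_mem' := by intro A _; simp
  mul_mem' := by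
    intro φ ψ hφ hψ A hA
    have h : ⇑(φ * ψ) '' A = φ '' (ψ '' A) := by rw [← Set.image_comp]; rfl
    rw [h, hψ A hA, hφ A hA]
  inv_mem' := by
    intro φ hφ A hA
    have h := hφ A hA
    calc ⇑φ⁻¹ '' A = ⇑φ⁻¹ '' (⇑φ '' A) := by rw [h]
    _ = A := by ext x; simp

/-- The subgroup `R_{−1}`: the stabilizer of the whole base chain `C` in `Aut(𝒦)`. -/
def Rminus (n v k : ℕ) (𝒦 : Set (Set (Fin v))) (C : Fin (k + 1) → Set (Fin v)) :
    Subgroup (Equiv.Perm (Fin v)) :=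
  AutK v 𝒦 ⊓ setStab v (Set.range C)

/-- The subgroup `R_t`: the elements of `Aut(𝒦)` mapping `C_m` onto itself for all `m ≠ t`. -/
def Rsub (n v k : ℕ) (𝒦 : Set (Set (Fin v))) (C : Fin (k + 1) → Set (Fin v))
    (t : Fin (k + 1)) : Subgroup (Equiv.Perm (Fin v)) :=
  AutK v 𝒦 ⊓ setStab v {A | ∃ j : Fin (k + 1), j ≠ t ∧ A = C j}

/-- The subgroup `{(σ, φ) : σ_i(a) = a for all i}` of the wreath product. -/
def sigmaFix (n v : ℕ) (𝒦 : Set (Set (Fin v))) (a : Fin n) : Subgroup (Wreath n v 𝒦) where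
  carrier := {p | ∀ i, p.left i a = a}
  one_mem' := by intro i; simp [SemidirectProduct.one_left]
  mul_mem' := by
    intro p q hp hq i
    have h : (p * q).left i = p.left i * q.left ((p.right : Equiv.Perm (Fin v))⁻¹ i) := rfl
    rw [h, Equiv.Perm.mul_apply, hq _, hp i]
  inv_mem' := by
    intro p hp i
    have h : (p⁻¹).left i = (p.left ((p.right : Equiv.Perm (Fin v)) i))⁻¹ := rfl
    rw [h]
    exact (Equiv.Perm.inv_eq_iff_eq).mpr (hp _).symm

/-- The subgroup (a): `{(σ,φ) : φ ∈ R_{−1}, σ_i(a) = a for all i}` of the wreath product. -/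
def Wa (n v k : ℕ) (𝒦 : Set (Set (Fin v))) (C : Fin (k + 1) → Set (Fin v)) (a : Fin n) :
    Subgroup (Wreath n v 𝒦) :=
  sigmaFix n v 𝒦 a ⊓
    Subgroup.comap ((AutK v 𝒦).subtype.comp SemidirectProduct.rightHom) (Rminus n v k 𝒦 C)

/-- The subgroup (c): `{(σ,φ) : φ ∈ R_t, σ_i(a) = a for all i}` of the wreath product. -/
def Wc (n v k : ℕ) (𝒦 : Set (Set (Fin v))) (C : Fin (k + 1) → Set (Fin v)) (a : Fin n)
    (t : Fin (k + 1)) : Subgroup (Wreath n v 𝒦) :=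
  sigmaFix n v 𝒦 a ⊓
    Subgroup.comap ((AutK v 𝒦).subtype.comp SemidirectProduct.rightHom) (Rsub n v k 𝒦 C t)

/-- The stabilizer of the base vertex `x₀` in the permutation group of `V`. -/
def stabx (v : ℕ) (x₀ : Fin v) : Subgroup (Equiv.Perm (Fin v)) :=
  MulAction.stabilizer (Equiv.Perm (Fin v)) x₀

lemma stabx_apply {v : ℕ} {x₀ : Fin v} (ψ : stabx v x₀) : (ψ : Equiv.Perm (Fin v)) x₀ = x₀ :=
  ψ.2

lemma stabx_inv_ne {v : ℕ} {x₀ : Fin v} (ψ : stabx v x₀) {i : Fin v} (hi : i ≠ x₀) :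
    (ψ : Equiv.Perm (Fin v))⁻¹ i ≠ x₀ := by
  intro h
  apply hi
  have := congrArg (ψ : Equiv.Perm (Fin v)) h
  simpa [stabx_apply] using this

lemma stabx_app_ne {v : ℕ} {x₀ : Fin v} (ψ : stabx v x₀) {i : Fin v} (hi : i ≠ x₀) :
    (ψ : Equiv.Perm (Fin v)) i ≠ x₀ := by
  intro h
  exact hi ((ψ : Equiv.Perm (Fin v)).injective (h.trans (stabx_apply ψ).symm))

/-- The subgroup `S_n × S_{n−1}^{v−1}` of `∏_{i ∈ V} S_n`:
the tuples `σ` with `σ_i(a) = a` for all `i ≠ x₀`. -/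
def Pgrp (n v : ℕ) (x₀ : Fin v) (a : Fin n) : Subgroup (Fin v → Equiv.Perm (Fin n)) where
  carrier := {σ | ∀ i, i ≠ x₀ → σ i a = a}
  one_mem' := fun i _ => rfl
  mul_mem' := by
    intro σ τ hσ hτ i hi
    rw [Pi.mul_apply, Equiv.Perm.mul_apply, hτ i hi, hσ i hi]
  inv_mem' := by
    intro σ hσ i hi
    rw [Pi.inv_apply]
    exact (Equiv.Perm.inv_eq_iff_eq).mpr (hσ i hi).symm

/-- The coordinate-permuting action of the stabilizer of `x₀` on `S_n × S_{n−1}^{v−1}`. -/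
def actb (n v : ℕ) (x₀ : Fin v) (a : Fin n) :
    stabx v x₀ →* MulAut (Pgrp n v x₀ a) where
  toFun ψ :=
    { toFun := fun σ => ⟨fun i => σ.1 ((ψ : Equiv.Perm (Fin v))⁻¹ i),
        fun i hi => σ.2 _ (stabx_inv_ne ψ hi)⟩
      invFun := fun σ => ⟨fun i => σ.1 ((ψ : Equiv.Perm (Fin v)) i),
        fun i hi => σ.2 _ (stabx_app_ne ψ hi)⟩
      left_inv := fun σ => Subtype.ext (funext fun i => by simp)
      right_inv := fun σ => Subtype.ext (funext fun i => by simp)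
      map_mul' := fun σ τ => rfl }
  map_one' := by
    ext σ i
    simp
  map_mul' := fun ψ₁ ψ₂ => by
    ext σ i
    simp [mul_inv_rev]

lemma Rminus_le_stabx (n v k : ℕ) (𝒦 : Set (Set (Fin v))) (C : Fin (k + 1) → Set (Fin v))
    (x₀ : Fin v) (hC0 : C 0 = {x₀}) : Rminus n v k 𝒦 C ≤ stabx v x₀ := by
  intro φ hφ
  have h := hφ.2 (C 0) ⟨0, rfl⟩
  rw [hC0, Set.image_singleton, Set.singleton_eq_singleton_iff] at h
  exact h

/-- The subgroup (b): `{(σ,φ) : φ ∈ R_{−1}, σ_i(a) = a for all i ≠ x₀}` of the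
wreath product. -/
def Wb (n v k : ℕ) (𝒦 : Set (Set (Fin v))) (C : Fin (k + 1) → Set (Fin v)) (x₀ : Fin v)
    (a : Fin n) (hC0 : C 0 = {x₀}) : Subgroup (Wreath n v 𝒦) where
  carrier := {p | (p.right : Equiv.Perm (Fin v)) ∈ Rminus n v k 𝒦 C ∧
    ∀ i, i ≠ x₀ → p.left i a = a}
  one_mem' := by
    refine ⟨?_, fun i _ => rfl⟩
    exact (Rminus n v k 𝒦 C).one_mem
  mul_mem' := by
    rintro p q ⟨hp1, hp2⟩ ⟨hq1, hq2⟩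
    refine ⟨?_, fun i hi => ?_⟩
    · exact (Rminus n v k 𝒦 C).mul_mem hp1 hq1
    · have h : (p * q).left i = p.left i * q.left ((p.right : Equiv.Perm (Fin v))⁻¹ i) := rfl
      rw [h, Equiv.Perm.mul_apply,
        hq2 _ (stabx_inv_ne ⟨_, Rminus_le_stabx n v k 𝒦 C x₀ hC0 hp1⟩ hi), hp2 i hi]
  inv_mem' := by
    rintro p ⟨hp1, hp2⟩
    refine ⟨(Rminus n v k 𝒦 C).inv_mem hp1, fun i hi => ?_⟩
    have h : (p⁻¹).left i = (p.left ((p.right : Equiv.Perm (Fin v)) i))⁻¹ := rfl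
    rw [h]
    exact (Equiv.Perm.inv_eq_iff_eq).mpr
      (hp2 _ (stabx_app_ne ⟨_, Rminus_le_stabx n v k 𝒦 C x₀ hC0 hp1⟩ hi)).symm

/-- The wreath product `S_{n−1} ≀ H` for a subgroup `H` of permutations of `V`, where
`S_{n−1}` is the group of permutations of `N` fixing the point `a`. -/
abbrev SmallWreath (n v : ℕ) (a : Fin n) (H : Subgroup (Equiv.Perm (Fin v))) :=
  (Fin v → Equiv.Perm {x : Fin n // x ≠ a})
    ⋊[(permPi v (Equiv.Perm {x : Fin n // x ≠ a})).comp H.subtype] H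

/-! ### Auxiliary lemmas -/

lemma theta_image_face {n v : ℕ} (σ : Fin v → Equiv.Perm (Fin n)) (φ : Equiv.Perm (Fin v))
    (F : Set (Fin v)) (ε : Fin v → Fin n) :
    theta σ φ '' face n v F ε = face n v (φ '' F) (fun i => σ (φ⁻¹ i) (ε (φ⁻¹ i))) := by
  ext ζ
  constructor
  · rintro ⟨η, hη, rfl⟩ i hi
    have h : φ⁻¹ i ∉ F := fun h => hi ⟨φ⁻¹ i, h, by simp⟩
    show σ (φ⁻¹ i) (η (φ⁻¹ i)) = _
    rw [hη _ h]
  · intro hζ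
    refine ⟨(theta σ φ).symm ζ, ?_, (theta σ φ).apply_symm_apply ζ⟩
    intro i hi
    show (σ i)⁻¹ (ζ (φ i)) = ε i
    have hmem : φ i ∉ φ '' F := by
      rintro ⟨x, hx, hxe⟩
      exact hi (φ.injective hxe ▸ hx)
    rw [hζ _ hmem]
    simp

lemma face_subset_aux {n v : ℕ} (hn : 2 ≤ n) {F G : Set (Fin v)} {ε δ : Fin v → Fin n}
    (h : face n v F ε ⊆ face n v G δ) : F ⊆ G ∧ ∀ i ∉ G, ε i = δ i := by
  have hε : ε ∈ face n v F ε := fun i _ => rfl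
  have h2 := h hε
  refine ⟨?_, h2⟩
  intro i hiF
  by_contra hiG
  haveI : Nontrivial (Fin n) := by
    obtain ⟨m, rfl⟩ : ∃ m, n = m + 2 := ⟨n - 2, by omega⟩
    infer_instance
  obtain ⟨b, hb⟩ := exists_ne (ε i)
  have hη : Function.update ε i b ∈ face n v F ε := by
    intro j hj
    exact Function.update_of_ne (fun hji => hj (by rw [hji]; exact hiF)) _ _
  have h3 := h hη i hiG
  rw [Function.update_self] at h3
  exact hb (h3.trans (h2 i hiG).symm)

lemma face_eq_iff {n v : ℕ} (hn : 2 ≤ n) {F G : Set (Fin v)} {ε δ : Fin v → Fin n} :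
    face n v F ε = face n v G δ ↔ F = G ∧ ∀ i ∉ G, ε i = δ i := by
  constructor
  · intro h
    obtain ⟨h1, h2⟩ := face_subset_aux hn h.subset
    obtain ⟨h3, _⟩ := face_subset_aux hn h.symm.subset
    exact ⟨subset_antisymm h1 h3, h2⟩
  · rintro ⟨rfl, h2⟩
    ext η
    exact ⟨fun hη i hi => (hη i hi).trans (h2 i hi),
      fun hη i hi => (hη i hi).trans (h2 i hi).symm⟩

lemma theta_fixes_face_iff {n v : ℕ} (hn : 2 ≤ n) (σ : Fin v → Equiv.Perm (Fin n))
    (φ : Equiv.Perm (Fin v)) (F : Set (Fin v)) (a : Fin n) :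
    theta σ φ '' face n v F (fun _ => a) = face n v F (fun _ => a) ↔
      φ '' F = F ∧ ∀ i ∉ F, σ i a = a := by
  rw [theta_image_face, face_eq_iff hn]
  constructor
  · rintro ⟨hF, h2⟩
    refine ⟨hF, fun i hi => ?_⟩
    have hφi : φ i ∉ F := by
      intro hmem
      rw [← hF] at hmem
      obtain ⟨x, hx, hxe⟩ := hmem
      exact hi (φ.injective hxe ▸ hx)
    have := h2 (φ i) hφi
    simpa using this
  · rintro ⟨hF, h2⟩
    refine ⟨hF, fun i hi => ?_⟩
    have hφi : φ⁻¹ i ∉ F := by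
      intro hmem
      exact hi (hF ▸ ⟨φ⁻¹ i, hmem, by simp⟩)
    exact h2 _ hφi

lemma restrict_aux {n : ℕ} {a : Fin n} {σ : Equiv.Perm (Fin n)} (h : σ a = a) :
    ∀ x, x ≠ a ↔ σ x ≠ a :=
  fun x => not_congr ⟨fun hx => by rw [hx, h], fun hx => σ.injective (hx.trans h.symm)⟩

/-- The general isomorphism used for parts (a) and (c). -/
def isoSmall (n v : ℕ) (𝒦 : Set (Set (Fin v))) (a : Fin n)
    (H : Subgroup (Equiv.Perm (Fin v))) (hH : H ≤ AutK v 𝒦) :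
    (sigmaFix n v 𝒦 a ⊓
      Subgroup.comap ((AutK v 𝒦).subtype.comp SemidirectProduct.rightHom) H :
        Subgroup (Wreath n v 𝒦)) ≃* SmallWreath n v a H where
  toFun p :=
    ⟨fun i => (p.1.left i).subtypePerm (fun x => (restrict_aux ((Subgroup.mem_inf.mp p.2).1 i) x).symm),
      ⟨(p.1.right : Equiv.Perm (Fin v)),
        Subgroup.mem_comap.mp (Subgroup.mem_inf.mp p.2).2⟩⟩
  invFun q :=
    ⟨⟨fun i => Equiv.Perm.ofSubtype (q.left i), ⟨q.right.1, hH q.right.2⟩⟩,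
      Subgroup.mem_inf.mpr
        ⟨fun i => Equiv.Perm.ofSubtype_apply_of_not_mem _ (by simp),
          Subgroup.mem_comap.mpr q.right.2⟩⟩
  left_inv p := by
    apply Subtype.ext
    apply SemidirectProduct.ext
    · funext i
      refine Equiv.Perm.ofSubtype_subtypePerm (fun x => (restrict_aux ((Subgroup.mem_inf.mp p.2).1 i) x).symm) (fun x hx hxa => hx ?_)
      subst hxa
      exact (Subgroup.mem_inf.mp p.2).1 i
    · rfl
  right_inv q := by
    apply SemidirectProduct.ext
    · funext i
      exact Equiv.Perm.subtypePerm_ofSubtype (q.left i)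
    · rfl
  map_mul' p q := by
    apply SemidirectProduct.ext
    · funext i
      apply Equiv.ext
      intro x
      apply Subtype.ext
      rfl
    · rfl

lemma x0_mem_C {v k : ℕ} {C : Fin (k + 1) → Set (Fin v)}
    (hchain : ∀ j j' : Fin (k + 1), j < j' → C j ⊂ C j')
    {x₀ : Fin v} (hC0 : C 0 = {x₀}) (j : Fin (k + 1)) : x₀ ∈ C j := by
  rcases eq_or_ne j 0 with rfl | hj
  · rw [hC0]; exact rfl
  · have h := hchain 0 j (Fin.pos_of_ne_zero hj)
    exact h.subset (hC0 ▸ rfl)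

/-- The isomorphism of part (b). -/
def isoB (n v k : ℕ) (𝒦 : Set (Set (Fin v))) (C : Fin (k + 1) → Set (Fin v)) (x₀ : Fin v)
    (a : Fin n) (hC0 : C 0 = {x₀}) :
    Wb n v k 𝒦 C x₀ a hC0 ≃*
      (Pgrp n v x₀ a ⋊[(actb n v x₀ a).comp
        (Subgroup.inclusion (Rminus_le_stabx n v k 𝒦 C x₀ hC0))] (Rminus n v k 𝒦 C)) where
  toFun p := ⟨⟨p.1.left, p.2.2⟩, ⟨(p.1.right : Equiv.Perm (Fin v)), p.2.1⟩⟩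
  invFun q :=
    ⟨⟨q.left.1, ⟨q.right.1, q.right.2.1⟩⟩, ⟨q.right.2, fun i hi => q.left.2 i hi⟩⟩
  left_inv p := by
    apply Subtype.ext
    apply SemidirectProduct.ext
    · rfl
    · rfl
  right_inv q := by
    apply SemidirectProduct.ext
    · rfl
    · rfl
  map_mul' p q := by
    apply SemidirectProduct.ext
    · apply Subtype.ext
      rfl
    · rfl

/-- Theorem 4.2: the distinguished generating subgroups of the automorphism group
`S_n ≀ Aut(𝒦)` of the power complex `n^𝒦`, relative to the base flag
`{ā} = C_{−1}(ā) ⊊ C_0(ā) ⊊ ⋯ ⊊ C_k(ā)`: (a) the stabilizer of the whole base flag equals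
`{(σ,φ) : φ ∈ R_{−1}, σ_i(a) = a ∀ i} ≅ S_{n−1} ≀ R_{−1}`; (b) the stabilizer of the flag
minus the vertex equals `{(σ,φ) : φ ∈ R_{−1}, σ_i(a) = a ∀ i ≠ x₀} ≅ (S_n × S_{n−1}^{v−1}) ⋊ R_{−1}`;
(c) for `1 ≤ m ≤ k`, the stabilizer of the flag minus the `(m−1)`-st face equals
`{(σ,φ) : φ ∈ R_{m−1}, σ_i(a) = a ∀ i} ≅ S_{n−1} ≀ R_{m−1}`. -/
theorem distinguished_generating_subgroups (n v k : ℕ) (hn : 2 ≤ n) (hv : 1 ≤ v)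
    (𝒦 : Set (Set (Fin v))) (hempty : ∅ ∈ 𝒦)
    (C : Fin (k + 1) → Set (Fin v)) (hCmem : ∀ j, C j ∈ 𝒦)
    (hchain : ∀ j j' : Fin (k + 1), j < j' → C j ⊂ C j')
    (hmax : IsMaxChainIn 𝒦 (insert ∅ (Set.range C)))
    (x₀ : Fin v) (hC0 : C 0 = {x₀}) (a : Fin n) :
    ((∀ p : Wreath n v 𝒦,
        (theta p.left (p.right : Equiv.Perm (Fin v)) '' face n v ∅ (fun _ => a)
            = face n v ∅ (fun _ => a) ∧
          ∀ j : Fin (k + 1), theta p.left (p.right : Equiv.Perm (Fin v)) ''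
              face n v (C j) (fun _ => a) = face n v (C j) (fun _ => a))
          ↔ p ∈ Wa n v k 𝒦 C a) ∧
      Nonempty (Wa n v k 𝒦 C a ≃* SmallWreath n v a (Rminus n v k 𝒦 C))) ∧
    ((∀ p : Wreath n v 𝒦,
        (∀ j : Fin (k + 1), theta p.left (p.right : Equiv.Perm (Fin v)) ''
            face n v (C j) (fun _ => a) = face n v (C j) (fun _ => a))
          ↔ p ∈ Wb n v k 𝒦 C x₀ a hC0) ∧
      Nonempty (Wb n v k 𝒦 C x₀ a hC0 ≃*
        (Pgrp n v x₀ a ⋊[(actb n v x₀ a).comp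
          (Subgroup.inclusion (Rminus_le_stabx n v k 𝒦 C x₀ hC0))] (Rminus n v k 𝒦 C)))) ∧
    (∀ t : Fin (k + 1), (t : ℕ) < k →
      (∀ p : Wreath n v 𝒦,
        (theta p.left (p.right : Equiv.Perm (Fin v)) '' face n v ∅ (fun _ => a)
            = face n v ∅ (fun _ => a) ∧
          ∀ j : Fin (k + 1), j ≠ t → theta p.left (p.right : Equiv.Perm (Fin v)) ''
              face n v (C j) (fun _ => a) = face n v (C j) (fun _ => a))
          ↔ p ∈ Wc n v k 𝒦 C a t) ∧
      Nonempty (Wc n v k 𝒦 C a t ≃* SmallWreath n v a (Rsub n v k 𝒦 C t))) := by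
  refine ⟨⟨?_, ⟨isoSmall n v 𝒦 a (Rminus n v k 𝒦 C) inf_le_left⟩⟩,
    ⟨?_, ⟨isoB n v k 𝒦 C x₀ a hC0⟩⟩,
    fun t ht => ⟨?_, ⟨isoSmall n v 𝒦 a (Rsub n v k 𝒦 C t) inf_le_left⟩⟩⟩
  · -- part (a)
    intro p
    constructor
    · rintro ⟨h0, hj⟩
      obtain ⟨-, hall⟩ := (theta_fixes_face_iff hn _ _ _ a).mp h0
      refine Subgroup.mem_inf.mpr ⟨?_, Subgroup.mem_comap.mpr ?_⟩
      · exact fun i => hall i (Set.notMem_empty i)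
      · refine Subgroup.mem_inf.mpr ⟨p.right.2, ?_⟩
        rintro A ⟨j, rfl⟩
        exact ((theta_fixes_face_iff hn _ _ _ a).mp (hj j)).1
    · intro hp
      obtain ⟨h1, h2⟩ := Subgroup.mem_inf.mp hp
      have h1' : ∀ i, p.left i a = a := h1
      have h2'' := (Subgroup.mem_inf.mp (Subgroup.mem_comap.mp h2)).2
      exact ⟨(theta_fixes_face_iff hn _ _ _ a).mpr ⟨by simp, fun i _ => h1' i⟩,
        fun j => (theta_fixes_face_iff hn _ _ _ a).mpr
          ⟨h2'' (C j) ⟨j, rfl⟩, fun i _ => h1' i⟩⟩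
  · -- part (b)
    intro p
    constructor
    · intro h
      have hx := fun j => (theta_fixes_face_iff hn _ _ _ a).mp (h j)
      have hmem : (p.right : Equiv.Perm (Fin v)) ∈ Rminus n v k 𝒦 C ∧
          ∀ i, i ≠ x₀ → p.left i a = a := by
        refine ⟨Subgroup.mem_inf.mpr ⟨p.right.2, ?_⟩, fun i hi => ?_⟩
        · rintro A ⟨j, rfl⟩
          exact (hx j).1
        · exact (hx 0).2 i (by simp [hC0, hi])
      exact hmem
    · intro hp
      have hp1 : (p.right : Equiv.Perm (Fin v)) ∈ Rminus n v k 𝒦 C ∧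
          ∀ i, i ≠ x₀ → p.left i a = a := hp
      intro j
      refine (theta_fixes_face_iff hn _ _ _ a).mpr
        ⟨(Subgroup.mem_inf.mp hp1.1).2 (C j) ⟨j, rfl⟩,
          fun i hi => hp1.2 i fun hix => hi (hix ▸ x0_mem_C hchain hC0 j)⟩
  · -- part (c)
    intro p
    constructor
    · rintro ⟨h0, hj⟩
      obtain ⟨-, hall⟩ := (theta_fixes_face_iff hn _ _ _ a).mp h0
      refine Subgroup.mem_inf.mpr ⟨?_, Subgroup.mem_comap.mpr ?_⟩
      · exact fun i => hall i (Set.notMem_empty i)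
      · refine Subgroup.mem_inf.mpr ⟨p.right.2, ?_⟩
        rintro A ⟨j, hjt, rfl⟩
        exact ((theta_fixes_face_iff hn _ _ _ a).mp (hj j hjt)).1
    · intro hp
      obtain ⟨h1, h2⟩ := Subgroup.mem_inf.mp hp
      have h1' : ∀ i, p.left i a = a := h1
      have h2'' := (Subgroup.mem_inf.mp (Subgroup.mem_comap.mp h2)).2
      exact ⟨(theta_fixes_face_iff hn _ _ _ a).mpr ⟨by simp, fun i _ => h1' i⟩,
        fun j hjt => (theta_fixes_face_iff hn _ _ _ a).mpr
          ⟨h2'' (C j) ⟨j, hjt, rfl⟩, fun i _ => h1' i⟩⟩
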